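/- The symmetry preserves its own Noether integral: if L is twice continuously differentiable, w : ℝ^m → ℝ^m is continuously differentiable and is an infinitesimal symmetry of L, then for all x, y ∈ ℝ^m the directional derivative of the Noether function J at (x,y) along the vector (w(x), w(y)) vanishes, i.e. ⟨∂_x J(x,y), w(x)⟩ + ⟨∂_y J(x,y), w(y)⟩ = 0. -/

import Mathlib

/-- The Noether function `J(x,y) = ⟨∂₁L(x,y), w(x)⟩`, expressed as the directional
derivative of `L` in its first argument along `w(x)`. -/
noncomputable def noetherJ (m : ℕ) (L : (Fin m → ℝ) → (Fin m → ℝ) → ℝ)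
    (w : (Fin m → ℝ) → (Fin m → ℝ)) (x y : Fin m → ℝ) : ℝ :=
  fderiv ℝ (fun x' => L x' y) x (w x)

/-- **The symmetry preserves its own Noether integral**: if `w` is a `C¹`
infinitesimal symmetry of the `C²` Lagrangian `L`, then the directional derivative
of the Noether function `J` at `(x,y)` along `(w(x), w(y))` vanishes. -/
theorem symmetry_preserves_noether (m : ℕ) (L : (Fin m → ℝ) → (Fin m → ℝ) → ℝ)
    (hL : ContDiff ℝ 2 (fun p : (Fin m → ℝ) × (Fin m → ℝ) => L p.1 p.2))
    (w : (Fin m → ℝ) → (Fin m → ℝ)) (hw : ContDiff ℝ 1 w)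
    (hsym : ∀ x y : Fin m → ℝ,
      fderiv ℝ (fun x' => L x' y) x (w x) + fderiv ℝ (fun y' => L x y') y (w y) = 0)
    (x y : Fin m → ℝ) :
    fderiv ℝ (fun x' => noetherJ m L w x' y) x (w x)
      + fderiv ℝ (fun y' => noetherJ m L w x y') y (w y) = 0 := by
  classical
  let E := (Fin m → ℝ)
  set f : E × E → ℝ := fun p => L p.1 p.2 with hf_def
  have hfd : Differentiable ℝ f := hL.differentiable (by norm_num)
  have hf'c : ContDiff ℝ 1 (fderiv ℝ f) := hL.fderiv_right (by norm_num)
  have hf'd : Differentiable ℝ (fderiv ℝ f) := hf'c.differentiable one_ne_zero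
  have hwd : Differentiable ℝ w := hw.differentiable one_ne_zero
  -- derivative of the inclusion x' ↦ (x', b)
  have hinl : ∀ (a b : E), HasFDerivAt (fun x' : E => (x', b))
      ((ContinuousLinearMap.id ℝ E).prod 0) a :=
    fun a b => (hasFDerivAt_id a).prodMk (hasFDerivAt_const b a)
  have hinr : ∀ (a b : E), HasFDerivAt (fun y' : E => (a, y'))
      ((0 : E →L[ℝ] E).prod (ContinuousLinearMap.id ℝ E)) b :=
    fun a b => (hasFDerivAt_const a b).prodMk (hasFDerivAt_id b)
  -- partial derivatives as full derivatives
  have hpart1 : ∀ (a b : E), HasFDerivAt (fun x' => L x' b)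
      ((fderiv ℝ f (a, b)).comp ((ContinuousLinearMap.id ℝ E).prod 0)) a :=
    fun a b => (hfd (a, b)).hasFDerivAt.comp (g := f) a (hinl a b)
  have hpart2 : ∀ (a b : E), HasFDerivAt (fun y' => L a y')
      ((fderiv ℝ f (a, b)).comp ((0 : E →L[ℝ] E).prod (ContinuousLinearMap.id ℝ E))) b :=
    fun a b => (hfd (a, b)).hasFDerivAt.comp b (hinr a b)
  have hJ : ∀ (a b : E), noetherJ m L w a b = fderiv ℝ f (a, b) (w a, 0) := by
    intro a b
    simp only [noetherJ, (hpart1 a b).fderiv]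
    simp; rfl
  have hP2 : ∀ (a b : E), fderiv ℝ (fun y' => L a y') b (w b) = fderiv ℝ f (a, b) (0, w b) := by
    intro a b
    rw [(hpart2 a b).fderiv]
    simp; rfl
  -- second derivative
  set f'' : E × E →L[ℝ] E × E →L[ℝ] ℝ := fderiv ℝ (fderiv ℝ f) (x, y) with hf''_def
  -- derivative of a ↦ fderiv f (a, y)
  have hDf'1 : HasFDerivAt (fun a : E => fderiv ℝ f (a, y))
      (f''.comp ((ContinuousLinearMap.id ℝ E).prod 0)) x :=
    (hf'd (x, y)).hasFDerivAt.comp x (hinl x y)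
  have hDf'2 : HasFDerivAt (fun b : E => fderiv ℝ f (x, b))
      (f''.comp ((0 : E →L[ℝ] E).prod (ContinuousLinearMap.id ℝ E))) y :=
    (hf'd (x, y)).hasFDerivAt.comp y (hinr x y)
  -- Term B: derivative in y of J
  have hB : fderiv ℝ (fun y' => noetherJ m L w x y') y (w y) = f'' (0, w y) (w x, 0) := by
    have h : HasFDerivAt (fun b : E => fderiv ℝ f (x, b) (w x, 0))
        (((fderiv ℝ f (x, y)).comp (0 : E →L[ℝ] E × E)) +
          (f''.comp ((0 : E →L[ℝ] E).prod (ContinuousLinearMap.id ℝ E))).flip (w x, 0)) y :=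
      hDf'2.clm_apply (hasFDerivAt_const (w x, 0) y)
    have heq : (fun y' => noetherJ m L w x y') = fun b : E => fderiv ℝ f (x, b) (w x, 0) := by
      funext b; exact hJ x b
    rw [heq, h.fderiv]
    simp; rfl
  -- Term for the mixed partial of the second summand of the symmetry identity
  have hg2 : HasFDerivAt (fun a : E => fderiv ℝ f (a, y) (0, w y))
      (((fderiv ℝ f (x, y)).comp (0 : E →L[ℝ] E × E)) +
        (f''.comp ((ContinuousLinearMap.id ℝ E).prod 0)).flip (0, w y)) x :=
    hDf'1.clm_apply (hasFDerivAt_const (0, w y) x)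
  -- differentiability of a ↦ J(a, y)
  have hg1 : DifferentiableAt ℝ (fun a : E => noetherJ m L w a y) x := by
    have h : DifferentiableAt ℝ (fun a : E => fderiv ℝ f (a, y) (w a, 0)) x := by
      apply DifferentiableAt.clm_apply
      · exact hDf'1.differentiableAt
      · exact ((hwd x).hasFDerivAt.prodMk (hasFDerivAt_const (0 : E) x)).differentiableAt
    have heq : (fun a : E => noetherJ m L w a y) = fun a : E => fderiv ℝ f (a, y) (w a, 0) := by
      funext a; exact hJ a y
    rw [heq]; exact h
  -- the symmetry identity as a function of x, for fixed y, is identically zero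
  have hphi : (fun a : E => noetherJ m L w a y + fderiv ℝ f (a, y) (0, w y)) = fun _ => (0 : ℝ) := by
    funext a
    have := hsym a y
    rw [hP2 a y] at this
    exact this
  have hA : fderiv ℝ (fun a : E => noetherJ m L w a y) x (w x)
      + fderiv ℝ (fun a : E => fderiv ℝ f (a, y) (0, w y)) x (w x) = 0 := by
    have hsum : fderiv ℝ (fun a : E => noetherJ m L w a y + fderiv ℝ f (a, y) (0, w y)) x
        = fderiv ℝ (fun a : E => noetherJ m L w a y) x
          + fderiv ℝ (fun a : E => fderiv ℝ f (a, y) (0, w y)) x :=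
      fderiv_add hg1 hg2.differentiableAt
    have h0 : fderiv ℝ (fun a : E => noetherJ m L w a y + fderiv ℝ f (a, y) (0, w y)) x = 0 := by
      rw [hphi]; exact fderiv_const_apply 0
    rw [h0] at hsum
    have := congrArg (fun (T : E →L[ℝ] ℝ) => T (w x)) hsum.symm
    simpa using this
  have hmixed : fderiv ℝ (fun a : E => fderiv ℝ f (a, y) (0, w y)) x (w x)
      = f'' (w x, 0) (0, w y) := by
    rw [hg2.fderiv]; simp
  -- Schwarz symmetry
  have hschwarz : f'' (w x, 0) (0, w y) = f'' (0, w y) (w x, 0) :=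
    second_derivative_symmetric (fun p => (hfd p).hasFDerivAt)
      (hf'd (x, y)).hasFDerivAt (w x, 0) (0, w y)
  rw [hmixed, hschwarz] at hA
  rw [hB]
  linarith
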